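/- Let X be an infinite-dimensional real normed space, let x* be a continuous linear functional on X with ‖x*‖ ≤ 1 − ε for some 0 < ε < 1. Then for every weak*-open set V containing x*, the diameter of V ∩ B_{X*} (in the dual norm) is at least 2ε. Consequently (1 − ε)·B_{X*} ⊆ (B_{X*})'_{2ε}. -/

import Mathlib

open NormedSpace Metric Pointwise

/-- The Szlenk derivative of a set `F` in the dual of `X`: the points of `F` all of whose
weak*-open neighbourhoods meet `F` in a set of norm-diameter at least `ε`. -/
def szlenkDeriv (X : Type*) [NormedAddCommGroup X] [NormedSpace ℝ X]
    (F : Set (StrongDual ℝ X)) (ε : ℝ) : Set (StrongDual ℝ X) :=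
  {f ∈ F | ∀ V : Set (WeakDual ℝ X), IsOpen V → StrongDual.toWeakDual f ∈ V →
    ε ≤ diam ((StrongDual.toWeakDual ⁻¹' V : Set (StrongDual ℝ X)) ∩ F)}

/-- In an infinite-dimensional space there is a norm-one functional vanishing on any
given finite set. -/
lemma exists_norm_one_vanishing (X : Type*) [NormedAddCommGroup X] [NormedSpace ℝ X]
    (hX : ¬ FiniteDimensional ℝ X) (s : Set X) (hs : s.Finite) :
    ∃ g : StrongDual ℝ X, ‖g‖ = 1 ∧ ∀ x ∈ s, g x = 0 := by
  set p : Submodule ℝ X := Submodule.span ℝ s with hp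
  haveI : FiniteDimensional ℝ p := FiniteDimensional.span_of_finite ℝ hs
  have hne : p ≠ ⊤ := by
    intro h
    have : FiniteDimensional ℝ (⊤ : Submodule ℝ X) := h ▸ ‹FiniteDimensional ℝ p›
    exact hX (Submodule.topEquiv (R := ℝ) (M := X)).finiteDimensional
  obtain ⟨x, hx⟩ : ∃ x, x ∉ p := by
    by_contra h
    push_neg at h
    exact hne (Submodule.eq_top_iff'.mpr h)
  have hclosed : IsClosed (p : Set X) := Submodule.closed_of_finiteDimensional p
  obtain ⟨f, u, hfs, hxu⟩ := geometric_hahn_banach_closed_point p.convex hclosed hx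
  have hker : ∀ a ∈ p, f a = 0 := by
    intro a ha
    by_contra h
    have h1 : f (((|u| + 1) / f a) • a) < u := hfs _ (p.smul_mem _ ha)
    rw [map_smul, smul_eq_mul, div_mul_cancel₀ _ h] at h1
    have : u ≤ |u| := le_abs_self u
    linarith
  have hu0 : (0 : ℝ) < u := by
    have := hfs 0 p.zero_mem
    simpa using this
  have hf0 : f ≠ 0 := by
    intro h
    rw [h] at hxu
    simp at hxu
    linarith
  have hfn : ‖f‖ ≠ 0 := norm_ne_zero_iff.mpr hf0
  refine ⟨‖f‖⁻¹ • f, ?_, ?_⟩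
  · rw [norm_smul, norm_inv, norm_norm, inv_mul_cancel₀ hfn]
  · intro y hy
    have : f y = 0 := hker y (Submodule.subset_span hy)
    simp [this]

/-- Key lemma: part 1 of the statement, for any functional of norm `≤ 1 - ε`. -/
lemma key_diam (X : Type*) [NormedAddCommGroup X] [NormedSpace ℝ X]
    (hX : ¬ FiniteDimensional ℝ X) (ε : ℝ) (hε0 : 0 < ε)
    (x' : StrongDual ℝ X) (hx' : ‖x'‖ ≤ 1 - ε) :
    ∀ V : Set (WeakDual ℝ X), IsOpen V → StrongDual.toWeakDual x' ∈ V →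
      2 * ε ≤ diam ((StrongDual.toWeakDual ⁻¹' V : Set (StrongDual ℝ X)) ∩ closedBall 0 1) := by
  intro V hV hVx
  have hemb := WeakBilin.isEmbedding (B := topDualPairing ℝ X)
    ContinuousLinearMap.coe_injective
  have hmem : V ∈ nhds (StrongDual.toWeakDual x') := hV.mem_nhds hVx
  erw [hemb.toIsInducing.nhds_eq_comap (StrongDual.toWeakDual x')] at hmem
  obtain ⟨U, hU, hUV⟩ := Filter.mem_comap.1 hmem
  rw [nhds_pi] at hU
  obtain ⟨I, hIfin, t, ht, htU⟩ := Filter.mem_pi.1 hU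
  obtain ⟨g, hg1, hg0⟩ := exists_norm_one_vanishing X hX I hIfin
  set a : StrongDual ℝ X := x' + ε • g with ha
  set b : StrongDual ℝ X := x' - ε • g with hb
  have hmemV : ∀ c : StrongDual ℝ X, (∀ i ∈ I, c i = x' i) →
      StrongDual.toWeakDual c ∈ V := by
    intro c hc
    apply hUV
    apply htU
    intro i hi
    simp only [show ∀ {α : Type _} (a : α) (s : Set α), a ∈ s ↔ s a from fun _ _ => Iff.rfl]
    show c i ∈ t i
    rw [hc i hi]
    exact mem_of_mem_nhds (ht i)
  have haV : StrongDual.toWeakDual a ∈ V := by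
    apply hmemV
    intro i hi
    simp [ha, hg0 i hi]
  have hbV : StrongDual.toWeakDual b ∈ V := by
    apply hmemV
    intro i hi
    simp [hb, hg0 i hi]
  have haB : a ∈ closedBall (0 : StrongDual ℝ X) 1 := by
    rw [mem_closedBall_zero_iff]
    calc ‖x' + ε • g‖ ≤ ‖x'‖ + ‖ε • g‖ := norm_add_le _ _
      _ ≤ (1 - ε) + ε := by
          rw [norm_smul, hg1, mul_one, Real.norm_eq_abs, abs_of_pos hε0]
          linarith
      _ = 1 := by ring
  have hbB : b ∈ closedBall (0 : StrongDual ℝ X) 1 := by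
    rw [mem_closedBall_zero_iff]
    calc ‖x' - ε • g‖ ≤ ‖x'‖ + ‖ε • g‖ := norm_sub_le _ _
      _ ≤ (1 - ε) + ε := by
          rw [norm_smul, hg1, mul_one, Real.norm_eq_abs, abs_of_pos hε0]
          linarith
      _ = 1 := by ring
  have hdist : dist a b = 2 * ε := by
    rw [dist_eq_norm]
    have : a - b = (2 * ε) • g := by
      rw [ha, hb]
      module
    rw [this, norm_smul, hg1, mul_one, Real.norm_eq_abs, abs_of_pos (by linarith)]
  have hbdd : Bornology.IsBounded
      ((StrongDual.toWeakDual ⁻¹' V : Set (StrongDual ℝ X)) ∩ closedBall 0 1) :=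
    (isBounded_closedBall).subset Set.inter_subset_right
  calc 2 * ε = dist a b := hdist.symm
    _ ≤ diam _ := dist_le_diam_of_mem hbdd ⟨haV, haB⟩ ⟨hbV, hbB⟩

theorem stmt4 (X : Type*) [NormedAddCommGroup X] [NormedSpace ℝ X]
    (hX : ¬ FiniteDimensional ℝ X) (ε : ℝ) (hε0 : 0 < ε) (hε1 : ε < 1)
    (x' : StrongDual ℝ X) (hx' : ‖x'‖ ≤ 1 - ε) :
    (∀ V : Set (WeakDual ℝ X), IsOpen V → StrongDual.toWeakDual x' ∈ V →
      2 * ε ≤ diam ((StrongDual.toWeakDual ⁻¹' V : Set (StrongDual ℝ X)) ∩ closedBall 0 1)) ∧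
    (1 - ε) • closedBall (0 : StrongDual ℝ X) 1 ⊆
      szlenkDeriv X (closedBall 0 1) (2 * ε) := by
  constructor
  · exact key_diam X hX ε hε0 x' hx'
  · intro y hy
    obtain ⟨z, hz, rfl⟩ := Set.mem_smul_set.1 hy
    have hzn : ‖z‖ ≤ 1 := mem_closedBall_zero_iff.1 hz
    have hyn : ‖(1 - ε) • z‖ ≤ 1 - ε := by
      rw [norm_smul, Real.norm_eq_abs, abs_of_pos (by linarith)]
      nlinarith
    refine ⟨mem_closedBall_zero_iff.2 (by linarith), ?_⟩
    exact key_diam X hX ε hε0 _ hyn
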